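/- Let A be a real symmetric positive semidefinite N×N matrix, τ > 0, u_0 ∈ ℝ^{N×k}, and u_j = cos(jτ√A) u_0. Define the data matrices D_j = u_0ᵀ u_j ∈ ℝ^{k×k}. Then the Gramian (mass matrix) blocks M_{j,l} = u_jᵀ u_l satisfy M_{j,l} = (1/2)(D_{j+l} + D_{|j-l|}) for all j, l ≥ 0. -/
import Mathlib


open Matrix

/-- The Gramian (mass matrix) blocks `M_{j,l} = u_jᵀ u_l` of the snapshots
`u_j = cos(jτ√A) u_0` are determined by the data matrices `D_j = u_0ᵀ u_j`:
`M_{j,l} = (1/2)(D_{j+l} + D_{|j-l|})`. -/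
theorem stmt_3 {n : Type*} [Fintype n] [DecidableEq n] {k : ℕ}
    (A Q : Matrix n n ℝ) (θ : n → ℝ)
    (hQ : Q * Qᵀ = 1) (hQ' : Qᵀ * Q = 1)
    (hθ : ∀ i, 0 ≤ θ i)
    (hA : A = Q * Matrix.diagonal θ * Qᵀ)
    (hApsd : A.PosSemidef)
    (F : ℝ → Matrix n n ℝ)
    (hF : ∀ t, F t = Q * Matrix.diagonal (fun i => Real.cos (t * Real.sqrt (θ i))) * Qᵀ)
    (τ : ℝ) (hτ : 0 < τ)
    (u0 : Matrix n (Fin k) ℝ) (u : ℕ → Matrix n (Fin k) ℝ)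
    (hu : ∀ j : ℕ, u j = F (j * τ) * u0)
    (D : ℕ → Matrix (Fin k) (Fin k) ℝ)
    (hD : ∀ j : ℕ, D j = u0ᵀ * u j) :
    ∀ j l : ℕ, (u j)ᵀ * u l =
      (1 / 2 : ℝ) • (D (j + l) + D (((j : ℤ) - l).natAbs)) := by
  -- F is symmetric
  have hFsym : ∀ t, (F t)ᵀ = F t := by
    intro t
    simp [hF, transpose_mul, Matrix.mul_assoc]
  -- F of absolute value
  have hFabs : ∀ x : ℝ, F |x| = F x := by
    intro x
    rcases abs_cases x with ⟨h, _⟩ | ⟨h, _⟩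
    · rw [h]
    · rw [h]
      simp only [hF, neg_mul, Real.cos_neg]
  -- product-to-sum identity for F
  have hmul : ∀ s t : ℝ, F s * F t = (1 / 2 : ℝ) • (F (s + t) + F (s - t)) := by
    intro s t
    simp only [hF]
    have key : Q * Matrix.diagonal (fun i => Real.cos (s * Real.sqrt (θ i))) * Qᵀ *
        (Q * Matrix.diagonal (fun i => Real.cos (t * Real.sqrt (θ i))) * Qᵀ)
        = Q * (Matrix.diagonal (fun i => Real.cos (s * Real.sqrt (θ i))) *
          Matrix.diagonal (fun i => Real.cos (t * Real.sqrt (θ i)))) * Qᵀ := by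
      simp only [Matrix.mul_assoc]
      rw [← Matrix.mul_assoc Qᵀ Q, hQ', Matrix.one_mul]
    rw [key, Matrix.diagonal_mul_diagonal]
    have hdiag : (Matrix.diagonal fun i => Real.cos (s * Real.sqrt (θ i)) *
        Real.cos (t * Real.sqrt (θ i)))
        = (1 / 2 : ℝ) • (Matrix.diagonal (fun i => Real.cos ((s + t) * Real.sqrt (θ i))) +
            Matrix.diagonal (fun i => Real.cos ((s - t) * Real.sqrt (θ i)))) := by
      ext a b
      rcases eq_or_ne a b with rfl | hab
      · have e1 : (s + t) * Real.sqrt (θ a) = s * Real.sqrt (θ a) + t * Real.sqrt (θ a) := by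
          ring
        have e2 : (s - t) * Real.sqrt (θ a) = s * Real.sqrt (θ a) - t * Real.sqrt (θ a) := by
          ring
        simp only [Matrix.smul_apply, Matrix.add_apply, Matrix.diagonal_apply_eq, e1, e2,
          Real.cos_add, Real.cos_sub, smul_eq_mul]
        ring
      · simp [Matrix.diagonal_apply_ne _ hab]
    rw [hdiag, Matrix.mul_smul, Matrix.smul_mul, Matrix.mul_add, Matrix.add_mul]
  intro j l
  have habs : ((((j : ℤ) - l).natAbs : ℝ)) = |(j : ℝ) - l| := by
    rw [Nat.cast_natAbs]
    push_cast
    ring_nf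
  have hF2 : F ((j : ℝ) * τ - l * τ) = F (((((j : ℤ) - l).natAbs : ℕ) : ℝ) * τ) := by
    have : ((((j : ℤ) - l).natAbs : ℕ) : ℝ) * τ = |((j : ℝ) - l) * τ| := by
      rw [abs_mul, abs_of_pos hτ, habs]
    rw [this, hFabs]
    ring_nf
  calc (u j)ᵀ * u l = (u0ᵀ * F ((j : ℝ) * τ)) * (F ((l : ℝ) * τ) * u0) := by
        rw [hu, hu, transpose_mul, hFsym]
    _ = u0ᵀ * (F ((j : ℝ) * τ) * F ((l : ℝ) * τ)) * u0 := by
        rw [Matrix.mul_assoc, Matrix.mul_assoc, Matrix.mul_assoc]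
    _ = u0ᵀ * ((1 / 2 : ℝ) • (F ((j : ℝ) * τ + l * τ) + F ((j : ℝ) * τ - l * τ))) * u0 := by
        rw [hmul]
    _ = (1 / 2 : ℝ) • (D (j + l) + D (((j : ℤ) - l).natAbs)) := by
        rw [hF2, hD, hD, hu, hu]
        have e : ((j : ℝ) * τ + l * τ) = (((j + l : ℕ) : ℝ) * τ) := by push_cast; ring
        rw [e]
        rw [Matrix.mul_smul, Matrix.smul_mul, Matrix.mul_add, Matrix.add_mul]
        rw [Matrix.mul_assoc, Matrix.mul_assoc]
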